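/- Let P and Q be orthogonal projections on a complex Hilbert space H. Then ‖PQ + QP‖ = ‖PQ‖² + ‖PQ‖. -/

import Mathlib

set_option synthInstance.maxHeartbeats 400000
set_option maxHeartbeats 1000000
set_option linter.unusedSectionVars false

open scoped ComplexInnerProductSpace
open Complex

theorem aux_le_of_sq (a b : ℝ) (hb : 0 ≤ b) (h : a^2 ≤ b^2) : a ≤ b := by
  nlinarith [sq_nonneg (a - b), sq_nonneg (a + b)]

theorem cs_step (m k p e n : ℝ) (h1 : k^2 + m^2 = 1) (h2 : p^2 + e^2 = n^2) :
    2*e*p*k ≤ n^2 + m*(n^2 - 2*p^2) := by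
  have he2 : e^2 = n^2 - p^2 := by linarith
  have hval : (k^2+m^2) * (4*p^2*e^2 + (n^2-2*p^2)^2) = (n^2)^2 := by
    rw [h1, he2]; ring
  have hid : (2*p*e*k - m*(n^2-2*p^2))^2 + (k*(n^2-2*p^2)+2*p*e*m)^2
      = (k^2+m^2) * (4*p^2*e^2 + (n^2-2*p^2)^2) := by ring
  have key : (2*p*e*k - m*(n^2-2*p^2))^2 ≤ (n^2)^2 := by
    nlinarith [sq_nonneg (k*(n^2-2*p^2)+2*p*e*m)]
  have := aux_le_of_sq (2*p*e*k - m*(n^2-2*p^2)) (n^2) (sq_nonneg n) key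
  linarith

theorem real_key (t n p e u w s : ℝ)
    (ht0 : 0 ≤ t) (ht1 : t ≤ 1) (hp : 0 ≤ p) (he : 0 ≤ e) (hu : 0 ≤ u) (hw : 0 ≤ w)
    (hpn : p^2 + e^2 = n^2) (hs : u^2 + w^2 = s) (h2 : s ≤ w*p) (h3 : s ≤ t^2*p^2) :
    2*s + 2*e*u ≤ (t^2+t)*n^2 := by
  have hs0 : 0 ≤ s := by nlinarith [sq_nonneg u, sq_nonneg w]
  have hn2 : 0 ≤ n^2 := by nlinarith [sq_nonneg p, sq_nonneg e]
  rcases eq_or_lt_of_le hs0 with hs0' | hs0'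
  · have hu0 : u = 0 := by nlinarith [sq_nonneg u, sq_nonneg w]
    rw [hu0, ← hs0']
    have : 0 ≤ (t^2+t) := by positivity
    nlinarith
  · have hp0 : 0 < p := by nlinarith
    have hp2 : 0 < p^2 := by positivity
    set m := Real.sqrt s / p with hm_def
    have hm0 : 0 < m := by positivity
    have hmp : m * p = Real.sqrt s := div_mul_cancel₀ _ (ne_of_gt hp0)
    have hm2 : m^2 * p^2 = s := by
      have h' : (m*p)^2 = s := by rw [hmp]; exact Real.sq_sqrt hs0
      nlinarith [h']
    have hm2t : m^2 ≤ t^2 := by nlinarith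
    have hmt : m ≤ t := aux_le_of_sq m t ht0 hm2t
    have hm1 : m ≤ 1 := hmt.trans ht1
    set k := Real.sqrt (1 - m^2) with hk_def
    have hk0 : 0 ≤ k := Real.sqrt_nonneg _
    have hm2_1 : 0 ≤ 1 - m^2 := by nlinarith
    have hk2 : k^2 = 1 - m^2 := Real.sq_sqrt hm2_1
    have hw2 : s^2 ≤ w^2 * p^2 := by nlinarith [sq_nonneg (w*p - s)]
    have hup : u^2 * p^2 + w^2 * p^2 = s * p^2 := by linear_combination p^2 * hs
    have hexp : (m*p*k)^2 * p^2 = s*p^2 - s^2 := by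
      have h' : (m*p*k)^2 = m^2*p^2*(1-m^2) := by rw [← hk2]; ring
      rw [h']; linear_combination (p^2 - m^2*p^2 - s) * hm2
    have hu2 : u^2 ≤ (m*p*k)^2 := by
      have h1 : u^2 * p^2 ≤ (m*p*k)^2 * p^2 := by rw [hexp]; linarith
      exact le_of_mul_le_mul_right h1 hp2
    have humpk : u ≤ m*p*k := aux_le_of_sq u (m*p*k) (by positivity) hu2
    have hcs : 2*e*p*k ≤ n^2 + m*(n^2 - 2*p^2) :=
      cs_step m k p e n (by linarith) hpn
    have hmul := mul_le_mul_of_nonneg_left hcs (le_of_lt hm0)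
    have expand : m*(n^2 + m*(n^2-2*p^2)) = m*n^2 + m^2*n^2 - 2*s := by
      linear_combination (-2 : ℝ) * hm2
    have step : 2*s + 2*e*(m*p*k) ≤ (m^2+m)*n^2 := by
      have h1 : m*(2*e*p*k) = 2*e*(m*p*k) := by ring
      rw [expand] at hmul
      rw [← h1]
      linarith
    have mono : (m^2+m)*n^2 ≤ (t^2+t)*n^2 := by
      have h1 : (0:ℝ) ≤ t^2+t-(m^2+m) := by nlinarith
      nlinarith [mul_nonneg h1 hn2]
    have h2e : 2*e*u ≤ 2*e*(m*p*k) := mul_le_mul_of_nonneg_left humpk (by positivity)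
    linarith


section AuxHilbert

variable {H : Type*} [NormedAddCommGroup H] [InnerProductSpace ℂ H] [CompleteSpace H]

theorem quad_bound {H : Type*} [NormedAddCommGroup H] [InnerProductSpace ℂ H] [CompleteSpace H]
    (S : H →L[ℂ] H) (hS : IsSelfAdjoint S) {C : ℝ} (hC : 0 ≤ C)
    (h : ∀ x : H, |(⟪S x, x⟫).re| ≤ C * ‖x‖^2) : ‖S‖ ≤ C := by
  have hmove : ∀ a b : H, ⟪S a, b⟫ = ⟪a, S b⟫ := fun a b => by
    conv_lhs => rw [← hS.adjoint_eq]
    exact ContinuousLinearMap.adjoint_inner_left S b a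
  have key : ∀ u v : H, 4 * (⟪S u, v⟫).re ≤ 2*C*(‖u‖^2 + ‖v‖^2) := by
    intro u v
    have h1 := h (u + v)
    have h2 := h (u - v)
    have par := parallelogram_law_with_norm ℂ u v
    have hsv : ⟪S v, u⟫ = (starRingEnd ℂ) ⟪S u, v⟫ := by
      rw [hmove v u, ← inner_conj_symm]
    have e1 : (⟪S (u+v), u+v⟫).re - (⟪S (u-v), u-v⟫).re = 4 * (⟪S u, v⟫).re := by
      rw [map_add, map_sub, inner_add_left, inner_add_right, inner_add_right,
        inner_sub_left, inner_sub_right, inner_sub_right, hsv]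
      have h3 : (⟪v, S u⟫).re = (⟪S u, v⟫).re := by
        rw [← inner_conj_symm v (S u)]; exact Complex.conj_re _
      simp only [Complex.add_re, Complex.sub_re, Complex.conj_re]
      linarith [h3]
    have habs1 : (⟪S (u+v), u+v⟫).re ≤ C * ‖u+v‖^2 := (abs_le.mp h1).2
    have habs2 : -(C * ‖u-v‖^2) ≤ (⟪S (u-v), u-v⟫).re := (abs_le.mp h2).1
    nlinarith [par]
  refine S.opNorm_le_bound hC fun x => ?_
  rcases eq_or_ne (S x) 0 with hSx | hSx
  · rw [hSx]; simp; positivity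
  have hx : x ≠ 0 := fun h' => hSx (by simp [h'])
  set a := ‖S x‖ with ha_def
  set b := ‖x‖ with hb_def
  have ha0 : 0 < a := norm_pos_iff.mpr hSx
  have hb0 : 0 < b := norm_pos_iff.mpr hx
  set t := Real.sqrt (a / b) with ht_def
  have ht0 : 0 < t := Real.sqrt_pos.mpr (by positivity)
  have ht2 : t^2 = a / b := Real.sq_sqrt (by positivity)
  have key' := key ((t:ℂ) • x) (((t⁻¹:ℝ):ℂ) • S x)
  have hinner : (⟪S ((t:ℂ) • x), ((t⁻¹:ℝ):ℂ) • S x⟫).re = ‖S x‖^2 := by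
    rw [map_smul, inner_smul_left, inner_smul_right, Complex.conj_ofReal,
      Complex.re_ofReal_mul, Complex.re_ofReal_mul, ← mul_assoc,
      mul_inv_cancel₀ (ne_of_gt ht0), one_mul]
    have h' := inner_self_eq_norm_sq (𝕜 := ℂ) (S x)
    rw [RCLike.re_to_complex] at h'
    exact h'
  have hn1 : ‖(t:ℂ) • x‖ = t * b := by
    rw [norm_smul, Complex.norm_real, Real.norm_eq_abs, abs_of_pos ht0]
  have hn2 : ‖((t⁻¹:ℝ):ℂ) • S x‖ = t⁻¹ * a := by
    rw [norm_smul, Complex.norm_real, Real.norm_eq_abs, abs_of_pos (inv_pos.mpr ht0)]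
  have ha2 : a^2 = ‖S x‖^2 := by rw [ha_def]
  rw [hinner, ← ha2, hn1, hn2] at key'
  have hexp : (t*b)^2 + (t⁻¹*a)^2 = 2 * (a*b) := by
    have h1 : (t*b)^2 = (a/b)*b^2 := by rw [mul_pow, ht2]
    have h2 : (t⁻¹*a)^2 = (b/a)*a^2 := by
      rw [mul_pow, ← Real.sqrt_inv, Real.sq_sqrt (by positivity)]
      field_simp
    rw [h1, h2]; field_simp; ring
  rw [hexp] at key'
  -- 4a² ≤ 2C·2ab
  have : 4 * a^2 ≤ 4*C*(a*b) := by linarith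
  have := le_of_mul_le_mul_right (by nlinarith : a * a ≤ (C*b) * a) ha0
  linarith


theorem aux_idem_apply (P : H →L[ℂ] H) (hP2 : P * P = P) (z : H) : P (P z) = P z := by
  rw [← ContinuousLinearMap.mul_apply, hP2]

theorem aux_move (P : H →L[ℂ] H) (hP : IsSelfAdjoint P) (a b : H) :
    ⟪P a, b⟫ = ⟪a, P b⟫ := by
  conv_lhs => rw [← hP.adjoint_eq]
  exact ContinuousLinearMap.adjoint_inner_left P b a

theorem aux_proj_inner (P : H →L[ℂ] H) (hP : IsSelfAdjoint P) (hP2 : P * P = P) (a : H) :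
    ⟪a, P a⟫ = ⟪P a, P a⟫ := by
  conv_lhs => rw [← aux_idem_apply P hP2 a]
  exact (aux_move P hP a (P a)).symm

theorem aux_re_self (z : H) : (⟪z, z⟫).re = ‖z‖^2 := by
  have h' := inner_self_eq_norm_sq (𝕜 := ℂ) z
  rwa [RCLike.re_to_complex] at h'

theorem aux_proj_pyth (P : H →L[ℂ] H) (hP : IsSelfAdjoint P) (hP2 : P * P = P) (a : H) :
    ‖P a‖^2 + ‖a - P a‖^2 = ‖a‖^2 := by
  have h1 := norm_sub_sq (𝕜 := ℂ) a (P a)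
  rw [RCLike.re_to_complex] at h1
  rw [show ⟪a, P a⟫ = ⟪P a, P a⟫ from aux_proj_inner P hP hP2 a, aux_re_self] at h1
  linarith

theorem aux_proj_norm_le (P : H →L[ℂ] H) (hP : IsSelfAdjoint P) (hP2 : P * P = P) (a : H) :
    ‖P a‖ ≤ ‖a‖ := by
  have h1 := aux_proj_pyth P hP hP2 a
  exact aux_le_of_sq _ _ (norm_nonneg a) (by nlinarith [sq_nonneg ‖a - P a‖])



theorem aux_proj_opnorm (P : H →L[ℂ] H) (hP : IsSelfAdjoint P) (hP2 : P * P = P) :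
    ‖P‖ ≤ 1 := by
  refine P.opNorm_le_bound zero_le_one fun a => ?_
  simpa using aux_proj_norm_le P hP hP2 a

theorem aux_quadform_bound (P Q : H →L[ℂ] H)
    (hP : IsSelfAdjoint P) (hP2 : P * P = P) (hQ : IsSelfAdjoint Q) (hQ2 : Q * Q = Q)
    (hQP : ‖Q * P‖ = ‖P * Q‖) (ht1 : ‖P * Q‖ ≤ 1) (x : H) :
    |(⟪(P * Q + Q * P) x, x⟫).re| ≤ (‖P * Q‖^2 + ‖P * Q‖) * ‖x‖^2 := by
  set t := ‖P * Q‖ with ht_def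
  set y := Q (P x) with hy_def
  have f0 : (P * Q + Q * P) x = P (Q x) + Q (P x) := by
    simp [ContinuousLinearMap.add_apply, ContinuousLinearMap.mul_apply]
  have fA : ⟪P (Q x), x⟫ = ⟪x, y⟫ := by
    rw [aux_move P hP (Q x) x, ← aux_move Q hQ x (P x)]
  have fB : ⟪Q (P x), x⟫ = (starRingEnd ℂ) ⟪x, y⟫ := by
    rw [aux_move Q hQ (P x) x, ← fA]
    rw [← inner_conj_symm]
    congr 1
    exact (aux_move P hP (Q x) x).symm
  have hre : (⟪(P * Q + Q * P) x, x⟫).re = 2 * (⟪x, y⟫).re := by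
    rw [f0, inner_add_left, fA, fB, Complex.add_re, Complex.conj_re]
    ring
  -- decomposition
  have h2 : ⟪P x, y⟫ = ⟪y, y⟫ := aux_proj_inner Q hQ hQ2 (P x)
  have h3 : ⟪x - P x, P y⟫ = 0 := by
    rw [← aux_move P hP (x - P x) y]
    rw [map_sub, aux_idem_apply P hP2 x, sub_self, inner_zero_left]
  have decomp : ⟪x, y⟫ = ⟪y, y⟫ + ⟪x - P x, y - P y⟫ := by
    have e1 : ⟪x - P x, y⟫ = ⟪x, y⟫ - ⟪P x, y⟫ := inner_sub_left _ _ _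
    have e2 : ⟪x - P x, y - P y⟫ = ⟪x - P x, y⟫ - ⟪x - P x, P y⟫ := inner_sub_right _ _ _
    rw [e2, h3, sub_zero, e1, h2]
    ring
  have hrere : (⟪x, y⟫).re = ‖y‖^2 + (⟪x - P x, y - P y⟫).re := by
    rw [decomp, Complex.add_re, aux_re_self]
  -- bounds
  have hcs : |(⟪x - P x, y - P y⟫).re| ≤ ‖x - P x‖ * ‖y - P y‖ := by
    refine le_trans (Complex.abs_re_le_norm _) ?_
    exact norm_inner_le_norm _ _
  have hyPx : ‖y‖^2 ≤ ‖P y‖ * ‖P x‖ := by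
    have hy1 : ⟪y, P x⟫ = ⟪P y, P x⟫ := by
      conv_lhs => rw [← aux_idem_apply P hP2 x]
      exact (aux_move P hP y (P x)).symm
    have hy2 : ⟪y, P x⟫ = ⟪y, y⟫ := by
      rw [← inner_conj_symm, h2, inner_self_conj]
    have : ‖y‖^2 = (⟪P y, P x⟫).re := by rw [← hy1, hy2, aux_re_self]
    rw [this]
    refine le_trans (le_abs_self _) (le_trans (Complex.abs_re_le_norm _) ?_)
    exact norm_inner_le_norm _ _
  have hyt : ‖y‖ ≤ t * ‖P x‖ := by
    have : y = (Q * P) (P x) := by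
      rw [hy_def, ContinuousLinearMap.mul_apply, aux_idem_apply P hP2 x]
    rw [this, ← hQP]
    exact (Q * P).le_opNorm (P x)
  have hs' : ‖y‖^2 ≤ t^2 * ‖P x‖^2 := by nlinarith [norm_nonneg y, norm_nonneg (P x), mul_nonneg (norm_nonneg (Q*P)) (norm_nonneg (P x))]
  have hpyth1 := aux_proj_pyth P hP hP2 x
  have hpyth2 := aux_proj_pyth P hP hP2 y
  have hrk := real_key t ‖x‖ ‖P x‖ ‖x - P x‖ ‖y - P y‖ ‖P y‖ (‖y‖^2)
    (norm_nonneg _) ht1 (norm_nonneg _) (norm_nonneg _) (norm_nonneg _) (norm_nonneg _)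
    hpyth1 (by linarith) hyPx hs'
  have habs : |(⟪(P * Q + Q * P) x, x⟫).re| ≤ 2*‖y‖^2 + 2*(‖x - P x‖ * ‖y - P y‖) := by
    rw [hre, hrere]
    have := abs_add_le (2*‖y‖^2) (2*(⟪x - P x, y - P y⟫).re)
    have h4 : |2*‖y‖^2| = 2*‖y‖^2 := _root_.abs_of_nonneg (by positivity)
    have h5 : |2*(⟪x - P x, y - P y⟫).re| ≤ 2*(‖x - P x‖ * ‖y - P y‖) := by
      rw [abs_mul, _root_.abs_of_nonneg (by norm_num : (0:ℝ) ≤ 2)]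
      linarith [hcs]
    calc |2 * (‖y‖ ^ 2 + (⟪x - P x, y - P y⟫).re)|
        = |2*‖y‖^2 + 2*(⟪x - P x, y - P y⟫).re| := by congr 1; ring
      _ ≤ |2*‖y‖^2| + |2*(⟪x - P x, y - P y⟫).re| := abs_add_le _ _
      _ ≤ 2*‖y‖^2 + 2*(‖x - P x‖ * ‖y - P y‖) := by rw [h4]; linarith
  calc |(⟪(P * Q + Q * P) x, x⟫).re| ≤ 2*‖y‖^2 + 2*(‖x - P x‖ * ‖y - P y‖) := habs
    _ ≤ (t^2 + t) * ‖x‖^2 := by linarith [hrk]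


theorem aux_lower (P Q : H →L[ℂ] H)
    (hP : IsSelfAdjoint P) (hP2 : P * P = P) (hQ : IsSelfAdjoint Q) (hQ2 : Q * Q = Q)
    (hQP : ‖Q * P‖ = ‖P * Q‖) (hPQP : ‖P * Q * P‖ = ‖P * Q‖^2) :
    ‖P * Q‖^2 + ‖P * Q‖ ≤ ‖P * Q + Q * P‖ := by
  set t := ‖P * Q‖ with ht_def
  clear_value t
  have htnn : (0:ℝ) ≤ t := by rw [ht_def]; exact norm_nonneg _
  rcases eq_or_lt_of_le htnn with h0 | h0
  · have ht0' : t = 0 := h0.symm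
    rw [ht0']
    simpa using norm_nonneg (P * Q + Q * P)
  have key : ∀ ε : ℝ, 0 < ε → t^2 + t ≤ ‖P * Q + Q * P‖ + ε := by
    intro ε hε
    have hden : (0:ℝ) < t*(2*t+4)^2 := by nlinarith
    set δ := min (t/2) (ε^2 / (t*(2*t+4)^2)) with hδ_def
    have hδ0 : 0 < δ := lt_min (by linarith) (div_pos (pow_pos hε 2) hden)
    have hδt : δ ≤ t/2 := min_le_left _ _
    have hδε : δ ≤ ε^2 / (t*(2*t+4)^2) := min_le_right _ _
    have hδε' : δ * (t*(2*t+4)^2) ≤ ε^2 := by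
      rw [← le_div_iff₀ hden]
      exact hδε
    clear_value δ
    -- find near-maximizing vector
    have hnot : ¬ ∀ z : H, ‖(Q * P) z‖ ≤ (t - δ) * ‖z‖ := by
      intro hall
      have h1 := ContinuousLinearMap.opNorm_le_bound (Q * P) (by linarith : (0:ℝ) ≤ t - δ) hall
      rw [hQP] at h1
      linarith
    push_neg at hnot
    obtain ⟨z, hz⟩ := hnot
    have hPz : P (P z) = P z := aux_idem_apply P hP2 z
    have hz1QP : Q (P z) = (Q * P) z := by rw [ContinuousLinearMap.mul_apply]
    have hz1n : ‖P z‖ ≤ ‖z‖ := aux_proj_norm_le P hP hP2 z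
    have hQz1 : (t - δ) * ‖P z‖ < ‖Q (P z)‖ := by
      rw [hz1QP]
      calc (t - δ) * ‖P z‖ ≤ (t - δ) * ‖z‖ := by nlinarith
        _ < ‖(Q * P) z‖ := hz
    have hz1pos : 0 < ‖P z‖ := by
      by_contra hcon
      push_neg at hcon
      have h1 : ‖P z‖ = 0 := le_antisymm hcon (norm_nonneg _)
      have h2 : P z = 0 := norm_eq_zero.mp h1
      rw [h2] at hQz1
      simp at hQz1
    have hz1ne : P z ≠ 0 := fun h => by rw [h] at hz1pos; simp at hz1pos
    -- normalize
    set x₁ := ((‖P z‖⁻¹ : ℝ) : ℂ) • (P z) with hx₁_def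
    have hx1 : ‖x₁‖ = 1 := by
      rw [hx₁_def, norm_smul, Complex.norm_real, Real.norm_eq_abs,
        _root_.abs_of_pos (inv_pos.mpr hz1pos)]
      field_simp
    have hPx₁ : P x₁ = x₁ := by rw [hx₁_def, map_smul, hPz]
    set y := Q x₁ with hy_def
    have hQy : Q y = y := aux_idem_apply Q hQ2 x₁
    have hy_eq : y = ((‖P z‖⁻¹ : ℝ) : ℂ) • (Q (P z)) := by rw [hy_def, hx₁_def, map_smul]
    have hy_norm : ‖y‖ = ‖P z‖⁻¹ * ‖Q (P z)‖ := by
      rw [hy_eq, norm_smul, Complex.norm_real, Real.norm_eq_abs,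
        _root_.abs_of_pos (inv_pos.mpr hz1pos)]
    have hy_gt : t - δ < ‖y‖ := by
      rw [hy_norm]
      have := mul_lt_mul_of_pos_left hQz1 (inv_pos.mpr hz1pos)
      calc t - δ = ‖P z‖⁻¹ * ((t - δ) * ‖P z‖) := by field_simp
        _ < ‖P z‖⁻¹ * ‖Q (P z)‖ := this
    have hy_le : ‖y‖ ≤ t := by
      have h1 : y = (Q * P) x₁ := by
        rw [ContinuousLinearMap.mul_apply, hPx₁]
      calc ‖y‖ = ‖(Q * P) x₁‖ := by rw [← h1]
        _ ≤ ‖Q * P‖ * ‖x₁‖ := (Q * P).le_opNorm x₁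
        _ = t := by rw [hQP, hx1, mul_one]
    set r := P y with hr_def
    have hr_le : ‖r‖ ≤ t^2 := by
      have h1 : r = (P * Q * P) x₁ := by
        rw [ContinuousLinearMap.mul_apply, ContinuousLinearMap.mul_apply, hPx₁]
      calc ‖r‖ = ‖(P * Q * P) x₁‖ := by rw [← h1]
        _ ≤ ‖P * Q * P‖ * ‖x₁‖ := (P * Q * P).le_opNorm x₁
        _ = t^2 := by rw [hPQP, hx1, mul_one]
    have hrx : (⟪r, x₁⟫).re = ‖y‖^2 := by
      rw [hr_def, aux_move P hP y x₁, hPx₁]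
      have h1 : ⟪y, x₁⟫ = ⟪y, y⟫ := by
        rw [hy_def, ← inner_conj_symm, aux_proj_inner Q hQ hQ2 x₁, inner_self_conj]
      rw [h1, aux_re_self]
    have hrxy : (⟪x₁, y⟫).re = ‖y‖^2 := by
      rw [hy_def, aux_proj_inner Q hQ hQ2 x₁, aux_re_self]
    -- the error vector
    set e := r - ((t^2 : ℝ) : ℂ) • x₁ with he_def
    have he_sq : ‖e‖^2 ≤ 4*t^3*δ := by
      have h1 := norm_sub_sq (𝕜 := ℂ) r (((t^2 : ℝ) : ℂ) • x₁)
      rw [RCLike.re_to_complex] at h1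
      have h2 : ⟪r, ((t^2 : ℝ) : ℂ) • x₁⟫ = ((t^2 : ℝ) : ℂ) * ⟪r, x₁⟫ := inner_smul_right _ _ _
      have h3 : (⟪r, ((t^2 : ℝ) : ℂ) • x₁⟫).re = t^2 * ‖y‖^2 := by
        rw [h2, Complex.re_ofReal_mul, hrx]
      have h4 : ‖((t^2 : ℝ) : ℂ) • x₁‖ = t^2 := by
        rw [norm_smul, Complex.norm_real, Real.norm_eq_abs, _root_.abs_of_nonneg (by positivity), hx1, mul_one]
      rw [h3, h4] at h1
      have h5 : (t - δ)^2 ≤ ‖y‖^2 := by nlinarith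
      have h6 : ‖r‖^2 ≤ t^4 := by nlinarith [norm_nonneg r]
      rw [← he_def] at h1
      nlinarith [mul_le_mul_of_nonneg_left h5 (sq_nonneg t), sq_nonneg (t*δ), sq_nonneg δ, sq_nonneg t]
    set v := x₁ + ((t⁻¹ : ℝ) : ℂ) • y with hv_def
    -- pointwise action facts
    have hSx₁ : (P * Q + Q * P) x₁ = r + y := by
      have h1 : (P * Q + Q * P) x₁ = P (Q x₁) + Q (P x₁) := rfl
      rw [h1, hPx₁, ← hy_def, ← hr_def]
    have hSy : (P * Q + Q * P) y = r + Q r := by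
      have h1 : (P * Q + Q * P) y = P (Q y) + Q (P y) := rfl
      rw [h1, hQy, ← hr_def]
    have hQe : Q e = Q r - ((t^2 : ℝ) : ℂ) • y := by
      rw [he_def, map_sub, map_smul, ← hy_def]
    have ht0' : (0:ℝ) < t := h0
    have htC : ((t : ℝ) : ℂ) ≠ 0 := Complex.ofReal_ne_zero.mpr (ne_of_gt ht0')
    clear_value x₁ y r e v
    have hdiff : (P * Q + Q * P) v - ((t^2 + t : ℝ) : ℂ) • v
        = e + ((t⁻¹ : ℝ) : ℂ) • e + ((t⁻¹ : ℝ) : ℂ) • (Q e) := by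
      rw [hv_def, map_add, map_smul, hSx₁, hSy, hQe, he_def]
      push_cast
      match_scalars <;> field_simp <;> ring
    have hQe_le : ‖Q e‖ ≤ ‖e‖ := aux_proj_norm_le Q hQ hQ2 e
    have hsmul_norm : ∀ w : H, ‖((t⁻¹ : ℝ) : ℂ) • w‖ = t⁻¹ * ‖w‖ := fun w => by
      rw [norm_smul, Complex.norm_real, Real.norm_eq_abs, _root_.abs_of_pos (inv_pos.mpr h0)]
    have hDnorm : ‖(P * Q + Q * P) v - ((t^2 + t : ℝ) : ℂ) • v‖ ≤ (1 + 2*t⁻¹) * ‖e‖ := by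
      rw [hdiff]
      calc ‖e + ((t⁻¹ : ℝ) : ℂ) • e + ((t⁻¹ : ℝ) : ℂ) • (Q e)‖
          ≤ ‖e + ((t⁻¹ : ℝ) : ℂ) • e‖ + ‖((t⁻¹ : ℝ) : ℂ) • (Q e)‖ := norm_add_le _ _
        _ ≤ ‖e‖ + ‖((t⁻¹ : ℝ) : ℂ) • e‖ + ‖((t⁻¹ : ℝ) : ℂ) • (Q e)‖ := by
            linarith [norm_add_le e (((t⁻¹ : ℝ) : ℂ) • e)]
        _ ≤ (1 + 2*t⁻¹) * ‖e‖ := by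
            rw [hsmul_norm e, hsmul_norm (Q e)]
            have h7 : t⁻¹ * ‖Q e‖ ≤ t⁻¹ * ‖e‖ :=
              mul_le_mul_of_nonneg_left hQe_le (le_of_lt (inv_pos.mpr h0))
            linarith
    have hv1 : 1 ≤ ‖v‖ := by
      have h1 := norm_add_sq (𝕜 := ℂ) x₁ (((t⁻¹ : ℝ) : ℂ) • y)
      rw [RCLike.re_to_complex] at h1
      have h2 : (⟪x₁, ((t⁻¹ : ℝ) : ℂ) • y⟫).re = t⁻¹ * ‖y‖^2 := by
        rw [inner_smul_right, Complex.re_ofReal_mul, hrxy]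
      rw [h2, hx1, ← hv_def] at h1
      have h3 : 0 ≤ t⁻¹ * ‖y‖^2 := by positivity
      have h4 : 1 ≤ ‖v‖^2 := by nlinarith [sq_nonneg ‖((t⁻¹ : ℝ) : ℂ) • y‖]
      exact aux_le_of_sq 1 ‖v‖ (norm_nonneg v) (by nlinarith)
    have hσv : ‖((t^2 + t : ℝ) : ℂ) • v‖ = (t^2 + t) * ‖v‖ := by
      rw [norm_smul, Complex.norm_real, Real.norm_eq_abs, _root_.abs_of_nonneg (by positivity)]
    have tri : (t^2 + t) * ‖v‖ ≤ ‖(P * Q + Q * P) v‖ + (1 + 2*t⁻¹) * ‖e‖ := by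
      have h2 : ((t^2 + t : ℝ) : ℂ) • v
          = (P * Q + Q * P) v - ((P * Q + Q * P) v - ((t^2 + t : ℝ) : ℂ) • v) := by abel
      calc (t^2 + t) * ‖v‖ = ‖((t^2 + t : ℝ) : ℂ) • v‖ := hσv.symm
        _ = ‖(P * Q + Q * P) v - ((P * Q + Q * P) v - ((t^2 + t : ℝ) : ℂ) • v)‖ := by
            rw [← h2]
        _ ≤ ‖(P * Q + Q * P) v‖ + ‖(P * Q + Q * P) v - ((t^2 + t : ℝ) : ℂ) • v‖ :=
            norm_sub_le _ _
        _ ≤ ‖(P * Q + Q * P) v‖ + (1 + 2*t⁻¹) * ‖e‖ := by linarith [hDnorm]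
    have hSvle : ‖(P * Q + Q * P) v‖ ≤ ‖P * Q + Q * P‖ * ‖v‖ := (P * Q + Q * P).le_opNorm v
    have heps : (1 + 2*t⁻¹) * ‖e‖ ≤ ε := by
      have h1 : ((1 + 2*t⁻¹) * ‖e‖)^2 ≤ ε^2 := by
        have h2 : ((1 + 2*t⁻¹) * ‖e‖)^2 = (1 + 2*t⁻¹)^2 * ‖e‖^2 := by ring
        have h3 : (1 + 2*t⁻¹)^2 * ‖e‖^2 ≤ (1 + 2*t⁻¹)^2 * (4*t^3*δ) :=
          mul_le_mul_of_nonneg_left he_sq (by positivity)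
        have h4 : (1 + 2*t⁻¹)^2 * (4*t^3*δ) = δ * (t*(2*t+4)^2) := by
          field_simp
          ring
        rw [h2]
        rw [h4] at h3
        linarith [hδε']
      exact aux_le_of_sq _ _ (le_of_lt hε) h1
    by_cases hc : t^2 + t ≤ ‖P * Q + Q * P‖
    · linarith
    · push_neg at hc
      have h1 : (t^2 + t - ‖P * Q + Q * P‖) * 1 ≤ (t^2 + t - ‖P * Q + Q * P‖) * ‖v‖ :=
        mul_le_mul_of_nonneg_left hv1 (by linarith)
      have h2 : (t^2 + t) * ‖v‖ ≤ ‖P * Q + Q * P‖ * ‖v‖ + ε :=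
        le_trans tri (add_le_add hSvle heps)
      have h3 : (t^2 + t - ‖P * Q + Q * P‖) * ‖v‖
          = (t^2 + t) * ‖v‖ - ‖P * Q + Q * P‖ * ‖v‖ := by ring
      linarith [h1, h2, h3]
  by_contra hcon
  push_neg at hcon
  have h1 := key ((t^2 + t - ‖P * Q + Q * P‖)/2) (by linarith)
  linarith


end AuxHilbert

/-- For orthogonal projections `P, Q` on a complex Hilbert space,
`‖PQ + QP‖ = ‖PQ‖² + ‖PQ‖`. -/
theorem norm_anticommutator_eq
    {H : Type*} [NormedAddCommGroup H] [InnerProductSpace ℂ H] [CompleteSpace H]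
    (P Q : H →L[ℂ] H) (hP : IsSelfAdjoint P) (hP2 : P * P = P)
    (hQ : IsSelfAdjoint Q) (hQ2 : Q * Q = Q) :
    ‖P * Q + Q * P‖ = ‖P * Q‖ ^ 2 + ‖P * Q‖ := by
  have hQP : ‖Q * P‖ = ‖P * Q‖ := by
    have h1 : Q * P = star (P * Q) := by rw [star_mul, hP.star_eq, hQ.star_eq]
    rw [h1, norm_star]
  have hPQP : ‖P * Q * P‖ = ‖P * Q‖^2 := by
    have h1 : star (Q * P) * (Q * P) = P * Q * P := by
      rw [star_mul, hP.star_eq, hQ.star_eq]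
      have h2 : (P * Q) * (Q * P) = P * (Q * Q) * P := by noncomm_ring
      rw [h2, hQ2]
    rw [← h1, CStarRing.norm_star_mul_self, hQP]
    ring
  have hS : IsSelfAdjoint (P * Q + Q * P) := by
    rw [isSelfAdjoint_iff, star_add, star_mul, star_mul, hP.star_eq, hQ.star_eq, add_comm]
  have hP1 : ‖P‖ ≤ 1 := aux_proj_opnorm P hP hP2
  have hQ1 : ‖Q‖ ≤ 1 := aux_proj_opnorm Q hQ hQ2
  have ht1 : ‖P * Q‖ ≤ 1 := by
    have h1 : ‖P * Q‖ ≤ ‖P‖ * ‖Q‖ := norm_mul_le _ _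
    nlinarith [norm_nonneg P, norm_nonneg Q]
  have upper : ‖P * Q + Q * P‖ ≤ ‖P * Q‖^2 + ‖P * Q‖ :=
    quad_bound (P * Q + Q * P) hS (by positivity)
      (fun x => aux_quadform_bound P Q hP hP2 hQ hQ2 hQP ht1 x)
  have lower : ‖P * Q‖^2 + ‖P * Q‖ ≤ ‖P * Q + Q * P‖ :=
    aux_lower P Q hP hP2 hQ hQ2 hQP hPQP
  linarith
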